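/- For any bonding grammar BG there exists a constant K ∈ ℕ such that every hypergraph in the language L(BG) has maximum vertex degree at most K. Consequently, the language of all star graphs (for each n, one center vertex connected by an edge to each of n leaf vertices) is not generated by any bonding grammar. -/

import Mathlib

/-! ## Hypergraphs (over a label alphabet `Λ`), bonding, breaking bonds,
bonding grammars, following "Bonding Grammars" (Pshenitsyn). -/

structure HGraph (Λ : Type) where
  V : Finset ℕ
  E : Finset ℕ
  att : ℕ → List ℕ
  lab : ℕ → Λ

namespace HGraph

variable {Λ : Type}

/-- Attachment vertices lie in `V` and attachment lengths agree with types. -/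
def WellFormed (typ : Λ → ℕ) (H : HGraph Λ) : Prop :=
  (∀ e ∈ H.E, ∀ v ∈ H.att e, v ∈ H.V) ∧
  (∀ e ∈ H.E, (H.att e).length = typ (H.lab e))

def Adj (H : HGraph Λ) (u v : ℕ) : Prop :=
  ∃ e ∈ H.E, u ∈ H.att e ∧ v ∈ H.att e

/-- There is a path between `u` and `v` in `H`. -/
def HasPath (H : HGraph Λ) (u v : ℕ) : Prop :=
  Relation.ReflTransGen H.Adj u v

def Connected (H : HGraph Λ) : Prop :=
  ∀ u ∈ H.V, ∀ v ∈ H.V, H.HasPath u v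

/-- The degree of a vertex: the number of pairs `(e, i)` with
`att e ( i ) = v`, i.e. occurrences of `v` in attachment sequences. -/
def degree (H : HGraph Λ) (v : ℕ) : ℕ :=
  ∑ e ∈ H.E, (H.att e).count v

def degreeSet (H : HGraph Λ) : Set ℕ :=
  {d | ∃ v ∈ H.V, H.degree v = d}

def Isomorphic (H G : HGraph Λ) : Prop :=
  ∃ f g : ℕ → ℕ,
    Set.BijOn f ↑H.V ↑G.V ∧ Set.BijOn g ↑H.E ↑G.E ∧
    ∀ e ∈ H.E, G.att (g e) = (H.att e).map f ∧ G.lab (g e) = H.lab e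

end HGraph

/-- A single bonding step: two distinct hyperedges `e₁, e₂` whose labels can be
bonded are merged into a single new hyperedge `e'` with concatenated
attachment sequence and label `lab e₁ ⊗ lab e₂`. -/
def BondingStep {Λ : Type} (bond : Λ → Λ → Option Λ) (H H' : HGraph Λ) : Prop :=
  ∃ e₁ e₂ e' t,
    e₁ ∈ H.E ∧ e₂ ∈ H.E ∧ e₁ ≠ e₂ ∧ e' ∉ H.E ∧
    bond (H.lab e₁) (H.lab e₂) = some t ∧
    H'.V = H.V ∧
    H'.E = (H.E \ {e₁, e₂}) ∪ {e'} ∧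
    (∀ e ∈ H.E \ {e₁, e₂}, H'.att e = H.att e ∧ H'.lab e = H.lab e) ∧
    H'.att e' = H.att e₁ ++ H.att e₂ ∧
    H'.lab e' = t

/-- Breaking the bond `e'` (whose label is `A₁ ⊗ A₂`) of `H'`, introducing the
fresh hyperedges `e₁, e₂`, yields `H`. -/
def BreakBondAt {Λ : Type} (typ : Λ → ℕ) (bond : Λ → Λ → Option Λ)
    (H' H : HGraph Λ) (e' e₁ e₂ : ℕ) : Prop :=
  ∃ A₁ A₂,
    e' ∈ H'.E ∧ e₁ ∉ H'.E ∧ e₂ ∉ H'.E ∧ e₁ ≠ e₂ ∧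
    bond A₁ A₂ = some (H'.lab e') ∧
    H.V = H'.V ∧
    H.E = (H'.E \ {e'}) ∪ {e₁, e₂} ∧
    (∀ e ∈ H'.E \ {e'}, H.att e = H'.att e ∧ H.lab e = H'.lab e) ∧
    H.att e₁ = (H'.att e').take (typ A₁) ∧
    H.att e₂ = (H'.att e').drop (typ A₁) ∧
    H.lab e₁ = A₁ ∧ H.lab e₂ = A₂

def BreakBond {Λ : Type} (typ : Λ → ℕ) (bond : Λ → Λ → Option Λ)
    (H' H : HGraph Λ) : Prop :=
  ∃ e' e₁ e₂, BreakBondAt typ bond H' H e' e₁ e₂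

/-- `BreaksTo typ bond H l F`: starting from `H` and successively breaking the
bonds listed in `l` yields `F`. -/
def BreaksTo {Λ : Type} (typ : Λ → ℕ) (bond : Λ → Λ → Option Λ) :
    HGraph Λ → List ℕ → HGraph Λ → Prop
  | H, [], F => H = F
  | H, e :: l, F => ∃ H₁ e₁ e₂, BreakBondAt typ bond H H₁ e e₁ e₂ ∧ BreaksTo typ bond H₁ l F

/-- `H` is a disjoint union of copies of hypergraphs from `Zs`
(this plays the role of `m · Z`). -/
def IsUnionOfCopies {Λ : Type} (Zs : Set (HGraph Λ)) (H : HGraph Λ) : Prop :=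
  ∃ (n : ℕ) (cV cE : ℕ → ℕ),
    (∀ v ∈ H.V, cV v < n) ∧ (∀ e ∈ H.E, cE e < n) ∧
    (∀ e ∈ H.E, ∀ v ∈ H.att e, v ∈ H.V) ∧
    (∀ e ∈ H.E, ∀ v ∈ H.att e, cV v = cE e) ∧
    ∀ i < n, ∃ Z0 ∈ Zs, HGraph.Isomorphic
      ⟨H.V.filter (fun v => cV v = i), H.E.filter (fun e => cE e = i), H.att, H.lab⟩ Z0

/-- `C` is a connected component of `H`. -/
def IsComponent {Λ : Type} (H C : HGraph Λ) : Prop :=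
  C.V ⊆ H.V ∧ C.att = H.att ∧ C.lab = H.lab ∧ C.V.Nonempty ∧
  (∀ u ∈ C.V, ∀ v ∈ H.V, (H.HasPath u v ↔ v ∈ C.V)) ∧
  ∀ e, e ∈ C.E ↔ (e ∈ H.E ∧ ∃ v ∈ H.att e, v ∈ C.V)

/-- Disjoint union of two hypergraphs (via an even/odd renaming). -/
def hsum {Λ : Type} (H K : HGraph Λ) : HGraph Λ :=
  ⟨H.V.image (fun v => 2 * v) ∪ K.V.image (fun v => 2 * v + 1),
   H.E.image (fun e => 2 * e) ∪ K.E.image (fun e => 2 * e + 1),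
   fun e => if e % 2 = 0 then (H.att (e / 2)).map (fun v => 2 * v)
            else (K.att (e / 2)).map (fun v => 2 * v + 1),
   fun e => if e % 2 = 0 then H.lab (e / 2) else K.lab (e / 2)⟩

/-- A bonding grammar: typed labels, nonterminal and terminal alphabets, a
partial bond function, and a tuple `Z` of start hypergraphs. -/
structure BondingGrammar (Λ : Type) where
  typ : Λ → ℕ
  N : Set Λ
  T : Set Λ
  bond : Λ → Λ → Option Λ
  k : ℕ
  Z : Fin k → HGraph Λ

namespace BondingGrammar

variable {Λ : Type}

/-- Side conditions from the definition of a bonding grammar: `N` and `T` are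
disjoint, the start hypergraphs are connected and well-formed, and the bond
function is a partial injective function `N × N ⇀ T` adding the types. -/
def WellFormed (G : BondingGrammar Λ) : Prop :=
  Disjoint G.N G.T ∧
  (∀ i, (G.Z i).Connected ∧ (G.Z i).WellFormed G.typ) ∧
  (∀ A₁ A₂ t, G.bond A₁ A₂ = some t →
    A₁ ∈ G.N ∧ A₂ ∈ G.N ∧ t ∈ G.T ∧ G.typ t = G.typ A₁ + G.typ A₂) ∧
  (∀ A₁ A₂ B₁ B₂ t, G.bond A₁ A₂ = some t → G.bond B₁ B₂ = some t →
    A₁ = B₁ ∧ A₂ = B₂)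

def ZSet (G : BondingGrammar Λ) : Set (HGraph Λ) :=
  {Z0 | ∃ i, Z0 = G.Z i}

/-- `G` generates `H` if some `m · Z` derives `H` by bonding steps. -/
def Generates (G : BondingGrammar Λ) (H : HGraph Λ) : Prop :=
  ∃ H₀, IsUnionOfCopies G.ZSet H₀ ∧
    Relation.ReflTransGen (BondingStep G.bond) H₀ H

/-- The language of `G`: generated hypergraphs all of whose labels are terminal. -/
def Lang (G : BondingGrammar Λ) : Set (HGraph Λ) :=
  {H | G.Generates H ∧ ∀ e ∈ H.E, H.lab e ∈ G.T}

end BondingGrammar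

/-! Labels `I, O` (nonterminal, type 1) and `b` (terminal, type 2). -/

inductive Lab : Type
  | I | O | b
deriving DecidableEq

def typLab : Lab → ℕ
  | .I => 1 | .O => 1 | .b => 2

def bondLab : Lab → Lab → Option Lab
  | .O, .I => some .b
  | _, _ => none

/-- The hypergraph `&(I^j, O^(k-j))`: one vertex with `j` hyperedges labelled
`I` and `k - j` hyperedges labelled `O` attached to it. -/
def Zreg (k j : ℕ) : HGraph Lab :=
  ⟨{0}, Finset.range k, fun _ => [0], fun e => if e < j then Lab.I else Lab.O⟩

/-- The bonding grammar `BG_reg^(k)` with start tuple `Z_0^(k), …, Z_k^(k)`. -/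
def BGreg (k : ℕ) : BondingGrammar Lab :=
  { typ := typLab, N := {Lab.I, Lab.O}, T := {Lab.b}, bond := bondLab,
    k := k + 1, Z := fun j => Zreg k (j : ℕ) }

/-- The star graph with one center connected by a `b`-labelled edge to each of
`n` leaves. -/
def starGraph (n : ℕ) : HGraph Lab :=
  ⟨Finset.range (n + 1), Finset.range n, fun e => [0, e + 1], fun _ => Lab.b⟩

lemma count_map_injOn {f : ℕ → ℕ} {S : Set ℕ} (hf : Set.InjOn f S) {v : ℕ} (hv : v ∈ S) :
    ∀ {l : List ℕ}, (∀ a ∈ l, a ∈ S) → (l.map f).count (f v) = l.count v := by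
  intro l
  induction l with
  | nil => intro; simp
  | cons a l ih =>
    intro h
    simp only [List.map_cons, List.count_cons, ih (fun x hx => h x (List.mem_cons_of_mem a hx))]
    congr 1
    by_cases hav : a = v
    · simp [hav]
    · have : f a ≠ f v := fun he => hav (hf (h a (List.mem_cons_self)) hv he)
      simp [hav, this]

lemma step_preserves {Λ : Type} {bond : Λ → Λ → Option Λ} {H H' : HGraph Λ}
    (h : BondingStep bond H H') : H'.V = H.V ∧ ∀ v, H'.degree v = H.degree v := by
  obtain ⟨e₁, e₂, e', t, he₁, he₂, hne, he', _, hV, hE, hatt, hatt', _⟩ := h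
  refine ⟨hV, fun v => ?_⟩
  have hsub : ({e₁, e₂} : Finset ℕ) ⊆ H.E := by
    intro x hx; rcases Finset.mem_insert.1 hx with h | h
    · exact h ▸ he₁
    · exact (Finset.mem_singleton.1 h) ▸ he₂
  have hdisj : Disjoint (H.E \ {e₁, e₂}) ({e'} : Finset ℕ) := by
    simp only [Finset.disjoint_singleton_right, Finset.mem_sdiff]
    exact fun h => he' h.1
  unfold HGraph.degree
  rw [hE, Finset.sum_union hdisj, Finset.sum_singleton, hatt',
    Finset.sum_congr rfl (fun e he => by rw [(hatt e he).1]),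
    List.count_append, ← Finset.sum_sdiff hsub, Finset.sum_pair hne]

lemma rtg_preserves {Λ : Type} {bond : Λ → Λ → Option Λ} {H H' : HGraph Λ}
    (h : Relation.ReflTransGen (BondingStep bond) H H') :
    H'.V = H.V ∧ ∀ v, H'.degree v = H.degree v := by
  induction h with
  | refl => exact ⟨rfl, fun _ => rfl⟩
  | tail _ hstep ih =>
    obtain ⟨hV, hd⟩ := step_preserves hstep
    exact ⟨hV.trans ih.1, fun v => (hd v).trans (ih.2 v)⟩

lemma degree_of_isomorphic {Λ : Type} {C Z0 : HGraph Λ}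
    (h : C.Isomorphic Z0) (hwf : ∀ e ∈ C.E, ∀ u ∈ C.att e, u ∈ C.V) {v : ℕ} (hv : v ∈ C.V) :
    ∃ w ∈ Z0.V, Z0.degree w = C.degree v := by
  obtain ⟨f, g, hf, hg, hc⟩ := h
  refine ⟨f v, hf.1 hv, ?_⟩
  unfold HGraph.degree
  rw [← Finset.sum_coe_sort Z0.E, ← Finset.sum_coe_sort C.E]
  refine (Finset.sum_bijective ?_ ?_ ?_ ?_).symm
  · exact fun e => ⟨g e.1, hg.1 e.2⟩
  · constructor
    · intro a b hab
      exact Subtype.ext (hg.2.1 a.2 b.2 (congrArg Subtype.val hab))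
    · intro b
      obtain ⟨a, ha, hab⟩ := hg.2.2 b.2
      exact ⟨⟨a, ha⟩, Subtype.ext hab⟩
  · simp
  · intro e _
    rw [(hc e.1 e.2).1]
    exact (count_map_injOn hf.2.1 hv (fun a ha => hwf e.1 e.2 a ha)).symm
lemma union_degree_bound {Λ : Type} {Zs : Set (HGraph Λ)} {H : HGraph Λ}
    (h : IsUnionOfCopies Zs H) {v : ℕ} (hv : v ∈ H.V) :
    ∃ Z0 ∈ Zs, ∃ w ∈ Z0.V, Z0.degree w = H.degree v := by
  obtain ⟨n, cV, cE, hcV, hcE, hwf, hcompat, hiso⟩ := h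
  set i := cV v with hi
  obtain ⟨Z0, hZ0, hiso'⟩ := hiso i (hcV v hv)
  set C : HGraph Λ :=
    ⟨H.V.filter (fun u => cV u = i), H.E.filter (fun e => cE e = i), H.att, H.lab⟩ with hC
  have hvC : v ∈ C.V := Finset.mem_filter.2 ⟨hv, rfl⟩
  have hwfC : ∀ e ∈ C.E, ∀ u ∈ C.att e, u ∈ C.V := by
    intro e he u hu
    have he' := Finset.mem_filter.1 he
    exact Finset.mem_filter.2 ⟨hwf e he'.1 u hu, (hcompat e he'.1 u hu).trans he'.2⟩
  obtain ⟨w, hw, hdeg⟩ := degree_of_isomorphic hiso' hwfC hvC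
  refine ⟨Z0, hZ0, w, hw, hdeg.trans ?_⟩
  show C.degree v = H.degree v
  unfold HGraph.degree
  rw [← Finset.sum_filter_add_sum_filter_not H.E (fun e => cE e = i)]
  have : ∑ e ∈ H.E.filter (fun e => ¬ cE e = i), (H.att e).count v = 0 := by
    refine Finset.sum_eq_zero fun e he => ?_
    have he' := Finset.mem_filter.1 he
    refine List.count_eq_zero_of_not_mem fun hmem => ?_
    exact he'.2 ((hcompat e he'.1 v hmem).symm.trans hi.symm)
  rw [this, add_zero]
/-- every bonding grammar language has bounded maximum degree;
consequently the language of all star graphs is not generated by any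
bonding grammar. -/
theorem bounded_degree_and_no_stars :
    (∀ (Λ : Type) (G : BondingGrammar Λ), ∃ K : ℕ,
      ∀ H ∈ BondingGrammar.Lang G, ∀ v ∈ H.V, H.degree v ≤ K) ∧
    (∀ G : BondingGrammar Lab,
      BondingGrammar.Lang G ≠ {H | ∃ n, H.Isomorphic (starGraph n)}) := by
  have part1 : ∀ (Λ : Type) (G : BondingGrammar Λ), ∃ K : ℕ,
      ∀ H ∈ BondingGrammar.Lang G, ∀ v ∈ H.V, H.degree v ≤ K := by
    intro Λ G
    refine ⟨Finset.univ.sup (fun i : Fin G.k => (G.Z i).V.sup (G.Z i).degree), ?_⟩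
    intro H hH v hv
    obtain ⟨⟨H₀, hu, hrtg⟩, _⟩ := hH
    obtain ⟨hV, hd⟩ := rtg_preserves hrtg
    obtain ⟨Z0, ⟨j, hj⟩, w, hw, hdeg⟩ := union_degree_bound hu (hV ▸ hv)
    calc H.degree v = Z0.degree w := by rw [hdeg, hd]
      _ ≤ (G.Z j).V.sup (G.Z j).degree := hj ▸ Finset.le_sup (hj ▸ hw)
      _ ≤ _ := Finset.le_sup (f := fun i : Fin G.k => (G.Z i).V.sup (G.Z i).degree) (Finset.mem_univ j)
  refine ⟨part1, ?_⟩
  intro G hLang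
  obtain ⟨K, hK⟩ := part1 Lab G
  have hmem : starGraph (K + 1) ∈ BondingGrammar.Lang G := by
    rw [hLang]
    exact ⟨K + 1, fun x => x, fun x => x, Set.bijOn_id _, Set.bijOn_id _,
      fun e _ => ⟨(List.map_id _).symm, rfl⟩⟩
  have h0 : (0 : ℕ) ∈ (starGraph (K + 1)).V := by
    simp [starGraph]
  have := hK _ hmem 0 h0
  have hdeg : (starGraph (K + 1)).degree 0 = K + 1 := by
    unfold HGraph.degree starGraph
    simp [List.count_cons]
  omega
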